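/- Let F be an algebraic closure of 𝔽_q, let c : C → X × X be a correspondence over F with X defined over 𝔽_q, and let Z ⊆ X be a closed subset. Let n ∈ ℕ be such that q^n > ram(c₂, Z) and Z is c^(n)-invariant. Then the correspondence c^(n) is contracting near Z. -/

import Mathlib

/-!
Lemma 1.11 of Varshavsky, "Intersection of a correspondence with a graph of Frobenius":
if `q^n > ram(c₂, Z)` and `Z` is `c^(n)`-invariant, then the Frobenius twist `c^(n)` is
contracting near `Z`.
-/

open AlgebraicGeometry CategoryTheory CategoryTheory.Limits TopologicalSpace Opposite

universe u

/-- `f : X ⟶ X` is the `q`-power Frobenius endomorphism of the scheme `X`: the identity on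
the underlying topological space and the `q`-th power map on the structure sheaf. -/
def IsSchemeFrobenius (q : ℕ) {X : Scheme.{u}} (f : X ⟶ X) : Prop :=
  ∃ hb : ∀ x, f.base x = x,
    ∀ (U : X.Opens) (s : Γ(X, U)),
      f.appLE U U (fun x hx => show f.base x ∈ U by rw [hb x]; exact hx) s = s ^ q

/-- The `n`-th iterate of an endomorphism of a scheme. -/
def iterateHom {X : Scheme.{u}} (f : X ⟶ X) : ℕ → (X ⟶ X)
  | 0 => 𝟙 X
  | n + 1 => f ≫ iterateHom f n

/-- The morphism `Spec F ⟶ Spec 𝔽_q` induced by the algebra structure. -/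
noncomputable abbrev specOfAlgebra (Fq F : Type u) [Field Fq] [Field F] [Algebra Fq F] :
    Spec (CommRingCat.of F) ⟶ Spec (CommRingCat.of Fq) :=
  Spec.map (CommRingCat.ofHom (algebraMap Fq F))

/-- Base change of an endomorphism `fr : X₀ ⟶ X₀` over `S` along `g : T ⟶ S`.  Applied to the
`q`-power Frobenius of the `𝔽_q`-model `X₀`, this is the geometric Frobenius `φ_q` of
`X = X₀ ×_{Spec 𝔽_q} Spec F`. -/
noncomputable def baseChangeEnd {X₀ S T : Scheme.{u}} (sX₀ : X₀ ⟶ S) (g : T ⟶ S)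
    (fr : X₀ ⟶ X₀) (hcomm : fr ≫ sX₀ = sX₀) :
    pullback sX₀ g ⟶ pullback sX₀ g :=
  pullback.map sX₀ g sX₀ g fr (𝟙 T) (𝟙 S) (by rw [hcomm, Category.comp_id]) (by simp)

/-- The stalk at `x` of the ideal sheaf `I_Z ⊆ O_X` of a closed subset `Z ⊆ X` (with its
reduced structure): germs of sections vanishing (i.e. with non-unit germ, equivalently germ
in the maximal ideal) at every point of `Z` in some neighbourhood of `x`. -/
noncomputable def stalkVanishingIdeal (X : Scheme.{u}) (Z : Set X) (x : X) :
    Ideal (X.presheaf.stalk x) :=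
  Ideal.span {g | ∃ (U : X.Opens) (hx : x ∈ U) (s : Γ(X, U)),
    X.presheaf.germ U x hx s = g ∧
    ∀ z (hz : z ∈ U), z ∈ Z → ¬ IsUnit (X.presheaf.germ U z hz s)}

/-- The stalk at `y` of the inverse-image ideal sheaf `f^·(I_Z)·O_C` (the ideal sheaf of the
schematic preimage `f⁻¹(Z)`): the ideal generated by the image of the stalk of `I_Z` under
the map on stalks. -/
noncomputable def pullbackStalkIdeal {C X : Scheme.{u}} (f : C ⟶ X) (Z : Set X) (y : C) :
    Ideal (C.presheaf.stalk y) :=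
  Ideal.map (f.stalkMap y).hom (stalkVanishingIdeal X Z (f.base y))

/-- `ram(f, Z)`: the smallest positive integer `m` such that `√I_{f⁻¹(Z)}^m ⊆ I_{f⁻¹(Z)}`,
where `I_{f⁻¹(Z)}` is the ideal sheaf of the schematic preimage of `Z` (a containment of
ideal sheaves holds iff it holds on all stalks). -/
noncomputable def ramDeg {C X : Scheme.{u}} (f : C ⟶ X) (Z : Set X) : ℕ :=
  sInf {m | 0 < m ∧ ∀ y : C, (pullbackStalkIdeal f Z y).radical ^ m ≤ pullbackStalkIdeal f Z y}

/-- The correspondence `c = (c₁, c₂)` is contracting near `Z`: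
`c₁^·(I_Z)·O_C ⊆ c₂^·(I_Z)·O_C`, and `(c₁^·(I_Z)·O_C)^n ⊆ (c₂^·(I_Z)·O_C)^{n+1}` for some
`n > 0` (containments of ideal sheaves, checked on stalks). -/
def ContractingNear {C X : Scheme.{u}} (c₁ c₂ : C ⟶ X) (Z : Set X) : Prop :=
  (∀ y : C, pullbackStalkIdeal c₁ Z y ≤ pullbackStalkIdeal c₂ Z y) ∧
  ∃ n : ℕ, 0 < n ∧ ∀ y : C,
    pullbackStalkIdeal c₁ Z y ^ n ≤ pullbackStalkIdeal c₂ Z y ^ (n + 1)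

/-- A closed subset `Z ⊆ X` is `c`-invariant for a correspondence `c = (c₁, c₂) : C ⟶ X × X`
if `c₁(c₂⁻¹(Z)) ⊆ Z` set-theoretically. -/
def CorrInvariant {C X : Scheme.{u}} (c₁ c₂ : C ⟶ X) (Z : Set X) : Prop :=
  c₁.base '' (c₂.base ⁻¹' Z) ⊆ Z

namespace FrobTwist

variable {X : Scheme.{u}}

lemma germ_mem_svi {Z : Set X} {U : X.Opens} {x : X} (hx : x ∈ U) (s : Γ(X, U))
    (hs : ∀ z (hz : z ∈ U), z ∈ Z → ¬ IsUnit (X.presheaf.germ U z hz s)) :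
    X.presheaf.germ U x hx s ∈ stalkVanishingIdeal X Z x :=
  Ideal.subset_span ⟨U, hx, s, rfl, hs⟩

/-- The ideal of sections of `Γ(X, U)` vanishing on `Z ∩ U`. -/
def vanIdeal (X : Scheme.{u}) (U : X.Opens) (Z : Set X) : Ideal Γ(X, U) where
  carrier := {a | ∀ z (hz : z ∈ U), z ∈ Z → ¬ IsUnit (X.presheaf.germ U z hz a)}
  zero_mem' := by
    intro z hz _
    rw [map_zero]
    exact not_isUnit_zero
  add_mem' := by
    intro a b ha hb z hz hzZ
    rw [map_add]
    exact IsLocalRing.nonunits_add (ha z hz hzZ) (hb z hz hzZ)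
  smul_mem' := by
    intro c a ha z hz hzZ
    rw [smul_eq_mul, map_mul]
    intro h
    exact ha z hz hzZ (IsUnit.mul_iff.1 h).2

lemma mem_vanIdeal_iff {U : X.Opens} {Z : Set X} (a : Γ(X, U)) :
    a ∈ vanIdeal X U Z ↔ ∀ z (hz : z ∈ U), z ∈ Z → ¬ IsUnit (X.presheaf.germ U z hz a) :=
  Iff.rfl

/-- L1a: over an affine open, the stalk vanishing ideal is generated by the sections
vanishing on `Z ∩ U`. -/
lemma stalkVanishingIdeal_eq_map {U : X.Opens} (hU : IsAffineOpen U) (Z : Set X) {x : X}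
    (hx : x ∈ U) :
    stalkVanishingIdeal X Z x = Ideal.map (X.presheaf.germ U x hx).hom (vanIdeal X U Z) := by
  apply le_antisymm
  · rw [stalkVanishingIdeal]
    apply Ideal.span_le.mpr
    rintro g ⟨V, hxV, s, rfl, hs⟩
    obtain ⟨f, hfV, hxf⟩ := hU.exists_basicOpen_le (V := V) ⟨x, hxV⟩ hx
    haveI := hU.isLocalization_basicOpen f
    set W := X.basicOpen f with hW
    have hWU : W ≤ U := X.basicOpen_le f
    -- restriction of s to W
    set s' : Γ(X, W) := X.presheaf.map (homOfLE hfV).op s with hs'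
    obtain ⟨⟨a, fk⟩, hsurj⟩ := IsLocalization.surj (M := Submonoid.powers f) (S := Γ(X, W)) s'
    obtain ⟨k, hk⟩ := fk.2
    have halg : (algebraMap Γ(X, U) Γ(X, W)) = ConcreteCategory.hom (X.presheaf.map (homOfLE hWU).op) := rfl
    -- s' * res (f^k) = res a
    have key : s' * X.presheaf.map (homOfLE hWU).op (f ^ k) =
        X.presheaf.map (homOfLE hWU).op a := by
      rw [← halg] at *
      simpa [hk] using hsurj
    -- a * f vanishes on Z ∩ U
    have hvan : a * f ∈ vanIdeal X U Z := by
      intro z hz hzZ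
      by_cases hzW : z ∈ W
      · have h1 : X.presheaf.germ W z hzW s' = X.presheaf.germ V z (hfV hzW) s := by
          rw [hs']
          exact X.presheaf.germ_res_apply (homOfLE hfV) z hzW s
        have h2 : ¬ IsUnit (X.presheaf.germ W z hzW s') := by
          rw [h1]; exact hs z (hfV hzW) hzZ
        -- germ of a at z equals germ s' * germ f^k
        have h3 : X.presheaf.germ U z hz a =
            X.presheaf.germ W z hzW s' * X.presheaf.germ U z hz (f ^ k) := by
          have := congrArg (X.presheaf.germ W z hzW) key
          rw [map_mul] at this
          rw [X.presheaf.germ_res_apply (homOfLE hWU) z hzW a] at this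
          rw [X.presheaf.germ_res_apply (homOfLE hWU) z hzW (f ^ k)] at this
          exact this.symm
        rw [map_mul]
        intro h
        have := (IsUnit.mul_iff.1 h).1
        rw [h3] at this
        exact h2 (IsUnit.mul_iff.1 this).1
      · rw [map_mul]
        have hfnu : ¬ IsUnit (X.presheaf.germ U z hz f) := by
          intro h
          exact hzW ((X.mem_basicOpen f z hz).mpr h)
        intro h
        exact hfnu (IsUnit.mul_iff.1 h).2
    -- now express germ x s in terms of germ x (a * f)
    have hxW : x ∈ W := hxf
    have hu : IsUnit (X.presheaf.germ U x hx f) := (X.mem_basicOpen f x hx).mp hxW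
    have hgerm : X.presheaf.germ V x hxV s * (X.presheaf.germ U x hx f) ^ (k + 1) =
        X.presheaf.germ U x hx (a * f) := by
      have h1 : X.presheaf.germ W x hxW s' = X.presheaf.germ V x hxV s :=
        X.presheaf.germ_res_apply (homOfLE hfV) x hxW s
      have := congrArg (X.presheaf.germ W x hxW) key
      rw [map_mul, X.presheaf.germ_res_apply (homOfLE hWU) x hxW a,
        X.presheaf.germ_res_apply (homOfLE hWU) x hxW (f ^ k), h1] at this
      rw [map_mul, ← this, map_pow]
      ring
    have hmem : X.presheaf.germ U x hx (a * f) ∈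
        Ideal.map (X.presheaf.germ U x hx).hom (vanIdeal X U Z) :=
      Ideal.mem_map_of_mem _ hvan
    have hu' : IsUnit ((X.presheaf.germ U x hx f) ^ (k + 1)) := hu.pow _
    obtain ⟨v, hv⟩ := hu'
    have : X.presheaf.germ V x hxV s = X.presheaf.germ U x hx (a * f) * ((v⁻¹ : _) : _) := by
      rw [← hgerm, ← hv]
      rw [mul_assoc]
      simp
    rw [this]
    exact Ideal.mul_mem_right _ _ hmem
  · rw [Ideal.map_le_iff_le_comap]
    intro a ha
    exact germ_mem_svi hx a ha

/-- L1b: if `Z` is closed and `z ∈ U \ Z`, some section in `vanIdeal` is invertible at `z`. -/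
lemma exists_unit_of_not_mem {U : X.Opens} (hU : IsAffineOpen U) {Z : Set X} (hZ : IsClosed Z)
    {z : X} (hz : z ∈ U) (hzZ : z ∉ Z) :
    ∃ a ∈ vanIdeal X U Z, IsUnit (X.presheaf.germ U z hz a) := by
  obtain ⟨g, hgV, hzg⟩ := hU.exists_basicOpen_le (V := ⟨Zᶜ, hZ.isOpen_compl⟩) ⟨z, hzZ⟩ hz
  refine ⟨g, ?_, (X.mem_basicOpen g z hz).mp hzg⟩
  intro w hw hwZ
  intro h
  have : w ∈ X.basicOpen g := (X.mem_basicOpen g w hw).mpr h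
  exact (hgV this) hwZ


variable {C : Scheme.{u}}

lemma stalkMap_germ_appLE (f : C ⟶ X) {U : X.Opens} {V : C.Opens} (e : V ≤ f ⁻¹ᵁ U)
    {y : C} (hy : y ∈ V) (s : Γ(X, U)) :
    f.stalkMap y (X.presheaf.germ U (f.base y) (e hy) s) =
      C.presheaf.germ V y hy (f.appLE U V e s) := by
  refine (Scheme.Hom.germ_stalkMap_apply f U y (e hy) s).trans ?_
  have : f.appLE U V e s = C.presheaf.map (homOfLE e).op (f.app U s) := rfl
  rw [this]
  exact (C.presheaf.germ_res_apply (homOfLE e) y hy (f.app U s)).symm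

/-- L2a: description of the pullback stalk ideal in affine charts. -/
lemma pullbackStalkIdeal_eq_map (f : C ⟶ X) (Z : Set X) {U : X.Opens} (hU : IsAffineOpen U)
    {V : C.Opens} (e : V ≤ f ⁻¹ᵁ U) {y : C} (hy : y ∈ V) :
    pullbackStalkIdeal f Z y = Ideal.map (C.presheaf.germ V y hy).hom
      (Ideal.map (f.appLE U V e).hom (vanIdeal X U Z)) := by
  rw [pullbackStalkIdeal, stalkVanishingIdeal_eq_map hU Z (e hy), Ideal.map_map, Ideal.map_map]
  congr 1
  ext a
  exact stalkMap_germ_appLE f e hy a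

/-- L2b: a section vanishing on `f ⁻¹ Z` has germ in the radical of the pullback ideal. -/
lemma germ_mem_radical_pullbackStalkIdeal (f : C ⟶ X) {Z : Set X} (hZ : IsClosed Z)
    {V' : C.Opens} {y : C} (hy' : y ∈ V') (t : Γ(C, V'))
    (ht : ∀ w (hw : w ∈ V'), f.base w ∈ Z → ¬ IsUnit (C.presheaf.germ V' w hw t)) :
    C.presheaf.germ V' y hy' t ∈ (pullbackStalkIdeal f Z y).radical := by
  obtain ⟨U, hUaff, hfyU, -⟩ := Opens.isBasis_iff_nbhd.mp X.isBasis_affineOpens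
    (show f.base y ∈ (⊤ : X.Opens) from trivial)
  obtain ⟨V, hVaff, hyV, hVsub⟩ := Opens.isBasis_iff_nbhd.mp C.isBasis_affineOpens
    (show y ∈ ((f ⁻¹ᵁ U) ⊓ V' : C.Opens) from ⟨hfyU, hy'⟩)
  have e : V ≤ f ⁻¹ᵁ U := fun w hw => (hVsub hw).1
  have hVV' : V ≤ V' := fun w hw => (hVsub hw).2
  set K := Ideal.map (f.appLE U V e).hom (vanIdeal X U Z) with hK
  have hpb := pullbackStalkIdeal_eq_map f Z hUaff e hyV
  set tV : Γ(C, V) := C.presheaf.map (homOfLE hVV').op t with htV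
  have hgerm : C.presheaf.germ V' y hy' t = C.presheaf.germ V y hyV tV :=
    (C.presheaf.germ_res_apply (homOfLE hVV') y hyV t).symm
  -- tV lies in the radical of K
  have hmem : tV ∈ K.radical := by
    rw [Ideal.radical_eq_sInf]
    rw [Ideal.mem_sInf]
    rintro P ⟨hKP, hPprime⟩
    haveI := hPprime
    set w := hVaff.fromSpec.base (⟨P, hPprime⟩ : PrimeSpectrum Γ(C, V)) with hw
    have hwV : w ∈ V := by
      have : w ∈ Set.range hVaff.fromSpec.base := Set.mem_range_self _
      rwa [hVaff.range_fromSpec] at this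
    letI := TopCat.Presheaf.algebra_section_stalk C.presheaf (⟨w, hwV⟩ : V)
    haveI hloc := hVaff.isLocalization_stalk' (⟨P, hPprime⟩ : PrimeSpectrum Γ(C, V)) hwV
    have hunit : ∀ b : Γ(C, V), IsUnit (C.presheaf.germ V w hwV b) ↔ b ∉ P := by
      intro b
      exact @IsLocalization.AtPrime.isUnit_to_map_iff _ _ (C.presheaf.stalk w) _ _ P _ hloc b
    have hfwZ : f.base w ∈ Z := by
      by_contra hno
      obtain ⟨a, haI, haU⟩ := exists_unit_of_not_mem hUaff hZ (e hwV) hno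
      have h1 : f.appLE U V e a ∈ P := hKP (Ideal.mem_map_of_mem _ haI)
      have h2 : ¬ IsUnit (C.presheaf.germ V w hwV (f.appLE U V e a)) := fun h =>
        ((hunit _).1 h) h1
      have h3 : C.presheaf.germ V w hwV (f.appLE U V e a) =
          f.stalkMap w (X.presheaf.germ U (f.base w) (e hwV) a) :=
        (stalkMap_germ_appLE f e hwV a).symm
      exact h2 (h3 ▸ (haU.map (f.stalkMap w).hom))
    have hnu : ¬ IsUnit (C.presheaf.germ V w hwV tV) := by
      have h4 : C.presheaf.germ V w hwV tV = C.presheaf.germ V' w (hVV' hwV) t :=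
        C.presheaf.germ_res_apply (homOfLE hVV') w hwV t
      rw [h4]
      exact ht w (hVV' hwV) hfwZ
    by_contra htP
    exact hnu ((hunit tV).2 htP)
  rw [hgerm, hpb]
  exact Ideal.map_radical_le _ (Ideal.mem_map_of_mem _ hmem)

/-- Radical commutes with localization (the nontrivial inclusion). -/
lemma radical_map_le_map_radical {R S : Type u} [CommRing R] [CommRing S] (M : Submonoid R)
    [Algebra R S] [IsLocalization M S] (K : Ideal R) :
    (Ideal.map (algebraMap R S) K).radical ≤ Ideal.map (algebraMap R S) K.radical := by
  by_cases htop : Ideal.map (algebraMap R S) K = ⊤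
  · have : Ideal.map (algebraMap R S) K.radical = ⊤ :=
      eq_top_iff.2 (htop ▸ Ideal.map_mono K.le_radical)
    rw [this]
    exact le_top
  intro x hx
  obtain ⟨N, hN⟩ := Ideal.mem_radical_iff.1 hx
  have hNpos : N ≠ 0 := by
    rintro rfl
    exact htop (Ideal.eq_top_of_isUnit_mem _ (by simpa using hN) isUnit_one)
  obtain ⟨⟨b, s⟩, rfl⟩ := IsLocalization.mk'_surjective M x
  have hb : algebraMap R S (b ^ N) ∈ Ideal.map (algebraMap R S) K := by
    have hspec : IsLocalization.mk' S b s * algebraMap R S (s : R) = algebraMap R S b :=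
      IsLocalization.mk'_spec S b s
    rw [map_pow, ← hspec, mul_pow]
    exact Ideal.mul_mem_right _ _ hN
  rw [IsLocalization.mem_map_algebraMap_iff M] at hb
  obtain ⟨⟨k, u⟩, hku⟩ := hb
  rw [← map_mul] at hku
  obtain ⟨v, hv⟩ := (IsLocalization.eq_iff_exists M S).1 hku
  -- v * (b^N * u) = v * k  ∈ K
  have hK1 : (v : R) * ((u : R) * b ^ N) ∈ K := by
    have : (v : R) * (b ^ N * (u : R)) = (v : R) * (k : R) := hv
    rw [mul_comm (u : R) (b ^ N), this]
    exact Ideal.mul_mem_left _ _ k.2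
  have hrad : ((v : R) * (u : R) * b) ∈ K.radical := by
    refine Ideal.mem_radical_iff.2 ⟨N, ?_⟩
    have hexp : ((v : R) * (u : R) * b) ^ N =
        ((v : R) * (u : R)) ^ (N - 1) * ((v : R) * (u : R)) * b ^ N := by
      rw [mul_pow, ← pow_succ, Nat.sub_add_cancel (Nat.one_le_iff_ne_zero.2 hNpos)]
    rw [hexp, mul_assoc, mul_assoc]
    exact Ideal.mul_mem_left _ _ (by rw [← mul_assoc]; exact (by
      have : (v : R) * ((u : R) * b ^ N) ∈ K := hK1
      rwa [← mul_assoc] at this))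
  -- x = mk' b s = algebraMap (v*u*b) * (unit of v*u*s)⁻¹
  have hx2 : IsLocalization.mk' S b s * algebraMap R S ((v : R) * (u : R) * (s : R)) =
      algebraMap R S ((v : R) * (u : R) * b) := by
    simp only [map_mul]
    have hspec : IsLocalization.mk' S b s * algebraMap R S (s : R) = algebraMap R S b :=
      IsLocalization.mk'_spec S b s
    calc IsLocalization.mk' S b s * (algebraMap R S (v : R) * algebraMap R S (u : R) *
        algebraMap R S (s : R))
        = algebraMap R S (v : R) * algebraMap R S (u : R) *
          (IsLocalization.mk' S b s * algebraMap R S (s : R)) := by ring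
      _ = algebraMap R S (v : R) * algebraMap R S (u : R) * algebraMap R S b := by rw [hspec]
  have hu : IsUnit (algebraMap R S ((v : R) * (u : R) * (s : R))) := by
    have : ((v * u * s : M) : R) = (v : R) * (u : R) * (s : R) := rfl
    rw [← this]
    exact IsLocalization.map_units S (v * u * s)
  obtain ⟨uu, huu⟩ := hu
  have hfin : IsLocalization.mk' S b s =
      algebraMap R S ((v : R) * (u : R) * b) * ((uu⁻¹ : Sˣ) : S) := by
    rw [← hx2, ← huu, mul_assoc]
    simp
  show IsLocalization.mk' S b s ∈ _
  rw [hfin]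
  exact Ideal.mul_mem_right _ _ (Ideal.mem_map_of_mem _ hrad)


/-- L3: uniform exponent taming the radical of the pullback ideal, from Noetherianity. -/
lemma exists_uniform_radical_pow_le (f : C ⟶ X) (Z : Set X)
    (hNoeth : ∀ V : C.Opens, IsAffineOpen V → IsNoetherianRing Γ(C, V))
    [CompactSpace C] :
    ∃ m : ℕ, 0 < m ∧ ∀ y : C,
      (pullbackStalkIdeal f Z y).radical ^ m ≤ pullbackStalkIdeal f Z y := by
  have hdata : ∀ y : C, ∃ (U : X.Opens) (V : C.Opens), IsAffineOpen U ∧ IsAffineOpen V ∧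
      V ≤ f ⁻¹ᵁ U ∧ y ∈ V := by
    intro y
    obtain ⟨U, hUaff, hfyU, -⟩ := Opens.isBasis_iff_nbhd.mp X.isBasis_affineOpens
      (show f.base y ∈ (⊤ : X.Opens) from trivial)
    obtain ⟨V, hVaff, hyV, hVsub⟩ := Opens.isBasis_iff_nbhd.mp C.isBasis_affineOpens
      (show y ∈ (f ⁻¹ᵁ U) from hfyU)
    exact ⟨U, V, hUaff, hVaff, hVsub, hyV⟩
  choose U V hUaff hVaff e hyV using hdata
  have hfg : ∀ y : C, ∃ m,
      ((Ideal.map (f.appLE (U y) (V y) (e y)).hom (vanIdeal X (U y) Z)).radical) ^ m ≤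
        Ideal.map (f.appLE (U y) (V y) (e y)).hom (vanIdeal X (U y) Z) := by
    intro y
    haveI := hNoeth (V y) (hVaff y)
    exact Ideal.exists_radical_pow_le_of_fg _ (IsNoetherian.noetherian _)
  choose m hm using hfg
  obtain ⟨T, hT⟩ := isCompact_univ.elim_finite_subcover (fun y : C => ((V y : Opens C) : Set C))
      (fun y => (V y).isOpen) (fun x _ => Set.mem_iUnion.2 ⟨x, hyV x⟩)
  refine ⟨T.sup m + 1, Nat.succ_pos _, ?_⟩
  intro y₀
  have hy₀mem : y₀ ∈ ⋃ i ∈ T, ((V i : Opens C) : Set C) := hT (Set.mem_univ y₀)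
  obtain ⟨i, hiT, hy₀⟩ := Set.mem_iUnion₂.1 hy₀mem
  set K := Ideal.map (f.appLE (U i) (V i) (e i)).hom (vanIdeal X (U i) Z) with hKdef
  have hKm : K.radical ^ (T.sup m + 1) ≤ K :=
    le_trans (Ideal.pow_le_pow_right (le_trans (Finset.le_sup hiT) (Nat.le_succ _))) (hm i)
  have hpb := pullbackStalkIdeal_eq_map f Z (hUaff i) (e i) hy₀
  rw [hpb]
  letI := TopCat.Presheaf.algebra_section_stalk C.presheaf (⟨y₀, hy₀⟩ : V i)
  haveI hloc := (hVaff i).isLocalization_stalk (⟨y₀, hy₀⟩ : ↥(V i))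
  have halg : (C.presheaf.germ (V i) y₀ hy₀).hom = algebraMap Γ(C, V i) (C.presheaf.stalk y₀) := rfl
  rw [halg]
  calc (Ideal.map (algebraMap Γ(C, V i) (C.presheaf.stalk y₀)) K).radical ^ (T.sup m + 1)
      ≤ (Ideal.map (algebraMap Γ(C, V i) (C.presheaf.stalk y₀)) K.radical) ^ (T.sup m + 1) :=
        Ideal.pow_right_mono (radical_map_le_map_radical
          ((hVaff i).primeIdealOf (⟨y₀, hy₀⟩ : ↥(V i))).asIdeal.primeCompl K) _
    _ = Ideal.map (algebraMap Γ(C, V i) (C.presheaf.stalk y₀)) (K.radical ^ (T.sup m + 1)) :=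
        (Ideal.map_pow _ _ _).symm
    _ ≤ Ideal.map (algebraMap Γ(C, V i) (C.presheaf.stalk y₀)) K := Ideal.map_mono hKm

/-- Affine sections of a scheme locally of finite type over a field are Noetherian. -/
lemma isNoetherianRing_sections {C : Scheme.{u}} {F : Type u} [Field F]
    (sC : C ⟶ Spec (CommRingCat.of F)) [LocallyOfFiniteType sC]
    (V : C.Opens) (hV : IsAffineOpen V) : IsNoetherianRing Γ(C, V) := by
  have e : V ≤ sC ⁻¹ᵁ ⊤ := le_top
  have hft : RingHom.FiniteType (sC.appLE ⊤ V e).hom :=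
    HasRingHomProperty.appLE @LocallyOfFiniteType sC inferInstance
      ⟨⊤, isAffineOpen_top _⟩ ⟨V, hV⟩ e
  haveI hN : IsNoetherianRing Γ(Spec (CommRingCat.of F), ⊤) :=
    isNoetherianRing_of_ringEquiv F
      ((Scheme.ΓSpecIso (CommRingCat.of F)).symm.commRingCatIsoToRingEquiv)
  letI := (sC.appLE ⊤ V e).hom.toAlgebra
  haveI : Algebra.FiniteType Γ(Spec (CommRingCat.of F), ⊤) Γ(C, V) := hft
  exact Algebra.FiniteType.isNoetherianRing Γ(Spec (CommRingCat.of F), ⊤) Γ(C, V)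

lemma compactSpace_of_quasiCompact {C Y : Scheme.{u}} (f : C ⟶ Y) [QuasiCompact f]
    (hY : CompactSpace Y) : CompactSpace C := by
  constructor
  have := QuasiCompact.isCompact_preimage (f := f) Set.univ isOpen_univ
    (by simpa [isCompact_univ_iff] using hY)
  simpa using this


section Frobenius

variable {Fq : Type u} [Field Fq] [Fintype Fq]

/-- The `q = card Fq`-power map as a ring homomorphism on any ring admitting a map from `Fq`. -/
noncomputable def qPow {R : Type u} [CommRing R] (h : Fq →+* R) : R →+* R where
  toFun x := x ^ (Fintype.card Fq)
  map_one' := one_pow _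
  map_mul' x y := mul_pow x y _
  map_zero' := zero_pow Fintype.card_ne_zero
  map_add' x y := by
    rcases subsingleton_or_nontrivial R with hR | hR
    · exact Subsingleton.elim _ _
    · haveI : CharP R (ringChar Fq) := charP_of_injective_ringHom h.injective (ringChar Fq)
      obtain ⟨n, hp, hcard⟩ := FiniteField.card Fq (ringChar Fq)
      haveI : Fact (Nat.Prime (ringChar Fq)) := ⟨hp⟩
      rw [hcard]
      exact add_pow_char_pow x y (ringChar Fq) ↑n

lemma qPow_apply {R : Type u} [CommRing R] (h : Fq →+* R) (x : R) :
    qPow h x = x ^ (Fintype.card Fq) := rfl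

/-- The absolute `q`-power Frobenius, as a morphism of presheafed spaces. -/
noncomputable def frobPSHom (W : Scheme.{u}) (h : ∀ U : W.Opens, Fq →+* Γ(W, U)) :
    W.toPresheafedSpace ⟶ W.toPresheafedSpace where
  base := 𝟙 _
  c := {
    app := fun U => CommRingCat.ofHom (qPow (h (unop U)))
    naturality := fun {U V} i => by
      ext s
      show (W.presheaf.map i s) ^ (Fintype.card Fq) = W.presheaf.map _ (s ^ (Fintype.card Fq))
      rw [map_pow] }

/-- The absolute `q`-power Frobenius, as a morphism of schemes. -/
noncomputable def frobAbs (W : Scheme.{u}) (h : ∀ U : W.Opens, Fq →+* Γ(W, U)) : W ⟶ W :=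
  Scheme.Hom.mk ⟨frobPSHom W h, by
    intro x
    constructor
    intro a ha
    obtain ⟨U, hxU, s, rfl⟩ := W.presheaf.exists_germ_eq (x := x) a
    have h1 : (frobPSHom W h).stalkMap x (W.presheaf.germ U x hxU s) =
        (W.presheaf.germ U x hxU s) ^ (Fintype.card Fq) := by
      have h2 := PresheafedSpace.stalkMap_germ (frobPSHom W h) U x hxU
      have h3 : (frobPSHom W h).stalkMap x (W.presheaf.germ U x hxU s) =
          W.presheaf.germ ((Opens.map (frobPSHom W h).base).obj U) x hxU (qPow (h U) s) :=
        congrArg (fun (m : Γ(W, U) ⟶ W.presheaf.stalk x) => m s) h2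
      rw [h3, qPow_apply]
      exact map_pow _ _ _
    rw [h1] at ha
    exact (isUnit_pow_iff Fintype.card_ne_zero).1 ha⟩

lemma frobAbs_isFrobenius (W : Scheme.{u}) (h : ∀ U : W.Opens, Fq →+* Γ(W, U)) :
    IsSchemeFrobenius (Fintype.card Fq) (frobAbs W h) := by
  refine ⟨fun x => rfl, ?_⟩
  intro U s
  have hle : U ≤ (frobAbs W h) ⁻¹ᵁ U := fun x hx => hx
  have h1 : (homOfLE hle).op = 𝟙 (op U) := rfl
  show W.presheaf.map (homOfLE hle).op ((frobAbs W h).app U s) = s ^ (Fintype.card Fq)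
  rw [h1]
  have h2 : W.presheaf.map (𝟙 (op U)) = 𝟙 Γ(W, U) := W.presheaf.map_id (op U)
  erw [h2]
  show (frobAbs W h).app U s = s ^ (Fintype.card Fq)
  rfl

lemma isSchemeFrobenius_preimage {W : Scheme.{u}} {q : ℕ} {f : W ⟶ W}
    (hf : IsSchemeFrobenius q f) (U : W.Opens) : f ⁻¹ᵁ U = U := by
  obtain ⟨hb, -⟩ := hf
  ext x
  show f.base x ∈ U ↔ x ∈ U
  rw [hb x]

lemma isSchemeFrobenius_appLE {W : Scheme.{u}} {q : ℕ} {f : W ⟶ W}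
    (hf : IsSchemeFrobenius q f) (U V : W.Opens) (e : V ≤ f ⁻¹ᵁ U) (s : Γ(W, U)) :
    f.appLE U V e s =
      (W.presheaf.map (homOfLE (e.trans (isSchemeFrobenius_preimage hf U).le)).op s) ^ q := by
  obtain ⟨hb, happ⟩ := hf
  have e0 : U ≤ f ⁻¹ᵁ U := (isSchemeFrobenius_preimage ⟨hb, happ⟩ U).ge
  have hVU : V ≤ U := e.trans (isSchemeFrobenius_preimage ⟨hb, happ⟩ U).le
  have h1 : f.appLE U U e0 ≫ W.presheaf.map (homOfLE hVU).op = f.appLE U V e :=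
    Scheme.Hom.appLE_map f e0 (homOfLE hVU).op
  have h2 : f.appLE U U e0 s = s ^ q := happ U s
  have h3 : f.appLE U V e s = W.presheaf.map (homOfLE hVU).op (f.appLE U U e0 s) := by
    rw [← h1]
    rfl
  rw [h3, h2, map_pow]

lemma isSchemeFrobenius_app {W : Scheme.{u}} {q : ℕ} {f : W ⟶ W}
    (hf : IsSchemeFrobenius q f) (U : W.Opens) (s : Γ(W, U)) :
    f.app U s =
      (W.presheaf.map (homOfLE (isSchemeFrobenius_preimage hf U).le).op s) ^ q := by
  have h := isSchemeFrobenius_appLE hf U (f ⁻¹ᵁ U) le_rfl s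
  rw [Scheme.Hom.app_eq_appLE]
  exact h

/-- Naturality: any morphism intertwines `q`-power Frobenii. -/
lemma isSchemeFrobenius_natural {W V : Scheme.{u}} {q : ℕ} (g : W ⟶ V) {fW : W ⟶ W}
    {fV : V ⟶ V} (hW : IsSchemeFrobenius q fW) (hV : IsSchemeFrobenius q fV) :
    fW ≫ g = g ≫ fV := by
  have hbase : (fW ≫ g).base = (g ≫ fV).base := by
    ext x
    rw [Scheme.Hom.comp_apply, Scheme.Hom.comp_apply, hW.1 x, hV.1 (g.base x)]
  apply Scheme.Hom.ext hbase
  intro U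
  have key : ∀ (i : op ((fW ≫ g) ⁻¹ᵁ U) ⟶ op ((g ≫ fV) ⁻¹ᵁ U)),
      (fW ≫ g).app U ≫ W.presheaf.map i = (g ≫ fV).app U := by
    intro i
    ext s
    show W.presheaf.map i ((fW ≫ g).app U s) = (g ≫ fV).app U s
    have hL1 : (fW ≫ g).app U s = fW.app (g ⁻¹ᵁ U) (g.app U s) := by
      rw [Scheme.Hom.comp_app]
      rfl
    rw [hL1, isSchemeFrobenius_app hW (g ⁻¹ᵁ U) (g.app U s)]
    erw [map_pow]
    have hcomp : W.presheaf.map i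
        (W.presheaf.map (homOfLE (isSchemeFrobenius_preimage hW (g ⁻¹ᵁ U)).le).op
          (g.app U s)) =
        W.presheaf.map ((homOfLE (isSchemeFrobenius_preimage hW (g ⁻¹ᵁ U)).le).op ≫ i)
          (g.app U s) := by
      exact (congrArg (fun m : W.presheaf.obj (op (g ⁻¹ᵁ U)) ⟶ W.presheaf.obj (op ((g ≫ fV) ⁻¹ᵁ U)) => m (g.app U s)) (W.presheaf.map_comp _ i)).symm
    rw [hcomp]
    have hT2 : ((g ≫ fV) ⁻¹ᵁ U) ≤ g ⁻¹ᵁ U := fun x hx =>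
      ((isSchemeFrobenius_preimage hV U).le : fV ⁻¹ᵁ U ≤ U) hx
    have harrow : (homOfLE (isSchemeFrobenius_preimage hW (g ⁻¹ᵁ U)).le).op ≫ i =
        (homOfLE hT2).op := Subsingleton.elim _ _
    rw [harrow]
    have hR1 : (g ≫ fV).app U s = g.app (fV ⁻¹ᵁ U) (fV.app U s) := by
      rw [Scheme.Hom.comp_app]
      rfl
    rw [hR1, isSchemeFrobenius_app hV U s, map_pow]
    congr 1
    have hnat := Scheme.Hom.map_appLE g (U := fV ⁻¹ᵁ U) (V := (g ≫ fV) ⁻¹ᵁ U) le_rfl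
      (homOfLE (isSchemeFrobenius_preimage hV U).le).op
    have h5 : g.appLE (fV ⁻¹ᵁ U) ((g ≫ fV) ⁻¹ᵁ U) le_rfl
        (V.presheaf.map (homOfLE (isSchemeFrobenius_preimage hV U).le).op s) =
        g.appLE U ((g ≫ fV) ⁻¹ᵁ U)
          (le_rfl.trans ((Opens.map g.base).map
            (homOfLE (isSchemeFrobenius_preimage hV U).le)).le) s := by
      rw [← hnat]
      rfl
    refine (show W.presheaf.map (homOfLE hT2).op (g.app U s)
        = g.appLE U ((g ≫ fV) ⁻¹ᵁ U) hT2 s from rfl).trans (h5.symm.trans ?_)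
    rw [Scheme.Hom.app_eq_appLE]
    rfl
  exact key _

end Frobenius


section SpecFrob

variable {Fq : Type u} [Field Fq] [Fintype Fq]

lemma isSchemeFrobenius_specMap {F : Type u} [Field F] (h : Fq →+* F) :
    IsSchemeFrobenius (Fintype.card Fq) (Spec.map (CommRingCat.ofHom (qPow h))) := by
  have hq : 0 < Fintype.card Fq := Fintype.card_pos
  have hbase : ∀ x, (Spec.map (CommRingCat.ofHom (qPow h))).base x = x := by
    intro x
    rw [Spec.map_base]
    apply PrimeSpectrum.ext
    ext a
    show qPow h a ∈ x.asIdeal ↔ a ∈ x.asIdeal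
    rw [qPow_apply]
    exact x.isPrime.pow_mem_iff_mem (Fintype.card Fq) hq
  refine ⟨hbase, ?_⟩
  intro U s
  haveI hsub : Subsingleton (↑↑(Spec (CommRingCat.of F)).toPresheafedSpace : Type u) :=
    inferInstanceAs (Subsingleton (PrimeSpectrum F))
  rcases eq_or_ne U ⊥ with rfl | hUne
  · exact Subsingleton.elim _ _
  · have hUtop : U = ⊤ := by
      have hne : (U : Set (↑↑(Spec (CommRingCat.of F)).toPresheafedSpace)).Nonempty := by
        by_contra hcon
        exact hUne (by
          apply Opens.ext
          simpa [Set.not_nonempty_iff_eq_empty] using hcon)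
      obtain ⟨p, hp⟩ := hne
      apply Opens.ext
      apply Set.eq_univ_of_forall
      intro x
      rwa [Subsingleton.elim x p]
    subst hUtop
    have e' : (⊤ : (Spec (CommRingCat.of F)).Opens) ≤
        (Spec.map (CommRingCat.ofHom (qPow h))) ⁻¹ᵁ ⊤ := le_top
    have h1 : (homOfLE e').op = 𝟙 (op (⊤ : (Spec (CommRingCat.of F)).Opens)) := rfl
    show (Spec (CommRingCat.of F)).presheaf.map (homOfLE e').op
      ((Spec.map (CommRingCat.ofHom (qPow h))).appTop s) = s ^ (Fintype.card Fq)
    rw [h1]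
    have h2 : (Spec (CommRingCat.of F)).presheaf.map
        (𝟙 (op (⊤ : (Spec (CommRingCat.of F)).Opens))) = 𝟙 _ :=
      (Spec (CommRingCat.of F)).presheaf.map_id _
    erw [h2]
    show (Spec.map (CommRingCat.ofHom (qPow h))).appTop s = s ^ (Fintype.card Fq)
    have hnat := Scheme.ΓSpecIso_naturality (CommRingCat.ofHom (qPow h))
    have h4 : (Scheme.ΓSpecIso (CommRingCat.of F)).hom
        ((Spec.map (CommRingCat.ofHom (qPow h))).appTop s) =
        qPow h ((Scheme.ΓSpecIso (CommRingCat.of F)).hom s) :=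
      congrArg (fun (m : Γ(Spec (CommRingCat.of F), ⊤) ⟶ (CommRingCat.of F)) => m s) hnat
    have h5 : ∀ y : Γ(Spec (CommRingCat.of F), ⊤),
        (Scheme.ΓSpecIso (CommRingCat.of F)).inv ((Scheme.ΓSpecIso (CommRingCat.of F)).hom y)
          = y := fun y =>
      congrArg (fun (m : Γ(Spec (CommRingCat.of F), ⊤) ⟶ Γ(Spec (CommRingCat.of F), ⊤)) => m y)
        (Iso.hom_inv_id (Scheme.ΓSpecIso (CommRingCat.of F)))
    calc (Spec.map (CommRingCat.ofHom (qPow h))).appTop s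
        = (Scheme.ΓSpecIso (CommRingCat.of F)).inv ((Scheme.ΓSpecIso (CommRingCat.of F)).hom
            ((Spec.map (CommRingCat.ofHom (qPow h))).appTop s)) := (h5 _).symm
      _ = (Scheme.ΓSpecIso (CommRingCat.of F)).inv
            (qPow h ((Scheme.ΓSpecIso (CommRingCat.of F)).hom s)) := by rw [h4]
      _ = (Scheme.ΓSpecIso (CommRingCat.of F)).inv
            (((Scheme.ΓSpecIso (CommRingCat.of F)).hom s) ^ (Fintype.card Fq)) := by
            rw [qPow_apply]
      _ = ((Scheme.ΓSpecIso (CommRingCat.of F)).inv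
            ((Scheme.ΓSpecIso (CommRingCat.of F)).hom s)) ^ (Fintype.card Fq) := map_pow _ _ _
      _ = s ^ (Fintype.card Fq) := by rw [h5]

/-- Sections along a Frobenius twist acquire `q`-th roots: property (P). -/
lemma exists_pow_of_eq_comp {W : Scheme.{u}} {q : ℕ} {φ G τ : W ⟶ W}
    (hG : IsSchemeFrobenius q G) (hφ : φ = G ≫ τ) (U V : W.Opens) (e : V ≤ φ ⁻¹ᵁ U)
    (s : Γ(W, U)) : ∃ t : Γ(W, V), φ.appLE U V e s = t ^ q := by
  subst hφ
  refine ⟨W.presheaf.map (homOfLE ((show V ≤ G ⁻¹ᵁ (τ ⁻¹ᵁ U) from e).trans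
    (isSchemeFrobenius_preimage hG (τ ⁻¹ᵁ U)).le)).op (τ.app U s), ?_⟩
  rw [Scheme.Hom.comp_appLE]
  exact isSchemeFrobenius_appLE hG (τ ⁻¹ᵁ U) V e (τ.app U s)

/-- Property (P) for the base change of the Frobenius of the `𝔽_q`-model. -/
lemma baseChangeEnd_pow {F : Type u} [Field F] [Algebra Fq F] [IsAlgClosure Fq F]
    (X₀ : Scheme.{u}) (sX₀ : X₀ ⟶ Spec (CommRingCat.of Fq))
    (fr : X₀ ⟶ X₀) (hfr : IsSchemeFrobenius (Fintype.card Fq) fr) (hfr₀ : fr ≫ sX₀ = sX₀)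
    (U V : (pullback sX₀ (specOfAlgebra Fq F) : Scheme.{u}).Opens)
    (e : V ≤ (baseChangeEnd sX₀ (specOfAlgebra Fq F) fr hfr₀) ⁻¹ᵁ U)
    (s : Γ((pullback sX₀ (specOfAlgebra Fq F) : Scheme.{u}), U)) :
    ∃ t, (baseChangeEnd sX₀ (specOfAlgebra Fq F) fr hfr₀).appLE U V e s =
      t ^ (Fintype.card Fq) := by
  have hq : 0 < Fintype.card Fq := Fintype.card_pos
  set q := Fintype.card Fq with hqdef
  set ψF : F →+* F := qPow (algebraMap Fq F) with hψF
  have hψ : IsSchemeFrobenius q (Spec.map (CommRingCat.ofHom ψF)) :=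
    isSchemeFrobenius_specMap (algebraMap Fq F)
  have hcomm2 : Spec.map (CommRingCat.ofHom ψF) ≫ specOfAlgebra Fq F = specOfAlgebra Fq F := by
    rw [← Spec.map_comp]
    congr 1
    ext a
    show ψF (algebraMap Fq F a) = algebraMap Fq F a
    rw [hψF, qPow_apply, ← map_pow, FiniteField.pow_card]
  set W : Scheme.{u} := pullback sX₀ (specOfAlgebra Fq F) with hW
  set hsec : ∀ U : W.Opens, Fq →+* Γ(W, U) := fun U =>
    (CommRingCat.ofHom (algebraMap Fq F) ≫ (Scheme.ΓSpecIso (CommRingCat.of F)).inv ≫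
      (pullback.snd sX₀ (specOfAlgebra Fq F)).appLE ⊤ U le_top).hom with hsecdef
  have hfrob := frobAbs_isFrobenius W hsec
  set G : W ⟶ W := pullback.map sX₀ (specOfAlgebra Fq F) sX₀ (specOfAlgebra Fq F) fr
      (Spec.map (CommRingCat.ofHom ψF)) (𝟙 _)
      (by rw [Category.comp_id, hfr₀]) (by rw [Category.comp_id, hcomm2]) with hG
  have hGeq : frobAbs W hsec = G := by
    apply pullback.hom_ext
    · rw [isSchemeFrobenius_natural (pullback.fst sX₀ (specOfAlgebra Fq F)) hfrob hfr]
      rw [hG]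
      exact (pullback.lift_fst _ _ _).symm
    · rw [isSchemeFrobenius_natural (pullback.snd sX₀ (specOfAlgebra Fq F)) hfrob hψ]
      rw [hG]
      exact (pullback.lift_snd _ _ _).symm
  have hGfrob : IsSchemeFrobenius q G := hGeq ▸ hfrob
  -- the arithmetic twist σ is an isomorphism
  have hbij : Function.Bijective ψF := by
    constructor
    · exact ψF.injective
    · intro c
      haveI : IsAlgClosed F := IsAlgClosure.isAlgClosed Fq
      obtain ⟨x, hx⟩ := IsAlgClosed.exists_pow_nat_eq c hq
      exact ⟨x, by rw [hψF, qPow_apply, hx]⟩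
  haveI hiso1 : IsIso (CommRingCat.ofHom ψF) := by
    have heq : CommRingCat.ofHom ψF =
        (RingEquiv.toCommRingCatIso (RingEquiv.ofBijective ψF hbij)).hom := by
      ext a
      rfl
    rw [heq]
    infer_instance
  haveI hiso2 : IsIso (Spec.map (CommRingCat.ofHom ψF)) := inferInstance
  set σ : W ⟶ W := pullback.map sX₀ (specOfAlgebra Fq F) sX₀ (specOfAlgebra Fq F) (𝟙 _)
      (Spec.map (CommRingCat.ofHom ψF)) (𝟙 _)
      (by rw [Category.comp_id, Category.id_comp]) (by rw [Category.comp_id, hcomm2]) with hσ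
  haveI hiso3 : IsIso σ := by
    rw [hσ]
    infer_instance
  have hφσ : baseChangeEnd sX₀ (specOfAlgebra Fq F) fr hfr₀ ≫ σ = G := by
    apply pullback.hom_ext
    · rw [Category.assoc, hσ, hG, baseChangeEnd, pullback.lift_fst, ← Category.assoc, pullback.lift_fst,
        pullback.lift_fst, Category.comp_id]
    · rw [Category.assoc, hσ, hG, baseChangeEnd, pullback.lift_snd, ← Category.assoc, pullback.lift_snd,
        pullback.lift_snd, Category.comp_id]
  have hφ : baseChangeEnd sX₀ (specOfAlgebra Fq F) fr hfr₀ = G ≫ inv σ := by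
    rw [← hφσ]
    simp
  exact exists_pow_of_eq_comp hGfrob hφ _ _ _ _

end SpecFrob


section Germ

lemma frobGerm_step {W : Scheme.{u}} {q : ℕ} {φ : W ⟶ W}
    (hP : ∀ (U V : W.Opens) (e : V ≤ φ ⁻¹ᵁ U) (s : Γ(W, U)),
      ∃ t : Γ(W, V), φ.appLE U V e s = t ^ q)
    (Z' : Set W) (x : W) :
    Ideal.map (φ.stalkMap x).hom (stalkVanishingIdeal W Z' (φ.base x)) ≤
      (stalkVanishingIdeal W (φ.base ⁻¹' Z') x) ^ q := by
  rw [stalkVanishingIdeal, Ideal.map_span]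
  apply Ideal.span_le.2
  rintro g ⟨g₀, ⟨U, hx, s, rfl, hs⟩, rfl⟩
  obtain ⟨t, ht⟩ := hP U (φ ⁻¹ᵁ U) le_rfl s
  have h1 : φ.stalkMap x (W.presheaf.germ U (φ.base x) hx s) =
      W.presheaf.germ (φ ⁻¹ᵁ U) x hx (φ.appLE U (φ ⁻¹ᵁ U) le_rfl s) :=
    stalkMap_germ_appLE φ le_rfl hx s
  show φ.stalkMap x (W.presheaf.germ U (φ.base x) hx s) ∈ _
  rw [h1, ht, map_pow]
  apply Ideal.pow_mem_pow
  apply germ_mem_svi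
  intro z hz hzZ hu
  have h3 : IsUnit (φ.stalkMap z (W.presheaf.germ U (φ.base z) hz s)) := by
    rw [stalkMap_germ_appLE φ le_rfl hz s, ht, map_pow]
    exact hu.pow q
  exact hs (φ.base z) hz hzZ ((isUnit_map_iff (φ.stalkMap z).hom _).1 h3)

lemma frobGerm_comp {W : Scheme.{u}} {a b : ℕ} {f g fg : W ⟶ W} (hfg : fg = f ≫ g)
    (hf : ∀ (Z' : Set W) (x : W),
      Ideal.map (f.stalkMap x).hom (stalkVanishingIdeal W Z' (f.base x)) ≤
        (stalkVanishingIdeal W (f.base ⁻¹' Z') x) ^ a)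
    (hg : ∀ (Z' : Set W) (x : W),
      Ideal.map (g.stalkMap x).hom (stalkVanishingIdeal W Z' (g.base x)) ≤
        (stalkVanishingIdeal W (g.base ⁻¹' Z') x) ^ b)
    (Z : Set W) (x : W) :
    Ideal.map (fg.stalkMap x).hom (stalkVanishingIdeal W Z (fg.base x)) ≤
      (stalkVanishingIdeal W (fg.base ⁻¹' Z) x) ^ (a * b) := by
  subst hfg
  have hcomp : Ideal.map ((f ≫ g).stalkMap x).hom (stalkVanishingIdeal W Z ((f ≫ g).base x)) =
      Ideal.map (f.stalkMap x).hom (Ideal.map (g.stalkMap (f.base x)).hom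
        (stalkVanishingIdeal W Z (g.base (f.base x)))) := by
    rw [Scheme.Hom.stalkMap_comp]
    exact (Ideal.map_map _ _).symm
  refine le_trans (le_of_eq hcomp) ?_
  refine le_trans (Ideal.map_mono (hg Z (f.base x))) ?_
  rw [Ideal.map_pow]
  refine le_trans (Ideal.pow_right_mono (hf (g.base ⁻¹' Z) x) b) ?_
  rw [← pow_mul]
  exact le_rfl

lemma frobGerm_iter {W : Scheme.{u}} {q : ℕ} {φ : W ⟶ W}
    (hP : ∀ (U V : W.Opens) (e : V ≤ φ ⁻¹ᵁ U) (s : Γ(W, U)),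
      ∃ t : Γ(W, V), φ.appLE U V e s = t ^ q) :
    ∀ (n : ℕ) (Z : Set W) (x : W),
    Ideal.map ((iterateHom φ n).stalkMap x).hom
        (stalkVanishingIdeal W Z ((iterateHom φ n).base x)) ≤
      (stalkVanishingIdeal W ((iterateHom φ n).base ⁻¹' Z) x) ^ (q ^ n)
  | 0, Z, x => by
    have h3 : (iterateHom φ 0).stalkMap x = 𝟙 (W.presheaf.stalk x) := Scheme.Hom.stalkMap_id W x
    rw [h3, pow_zero, pow_one]
    exact le_of_eq (Ideal.map_id _)
  | (n+1), Z, x => by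
    have h4 : q * q ^ n = q ^ (n + 1) := by ring
    rw [← h4]
    exact frobGerm_comp (rfl : iterateHom φ (n+1) = φ ≫ iterateHom φ n)
      (frobGerm_step hP) (frobGerm_iter hP n) Z x

end Germ


/-- The core of Lemma 1.11, for an abstract endomorphism `φ` with the `q`-power property. -/
lemma main_core {C X : Scheme.{u}} (c₁ c₂ : C ⟶ X) (φ : X ⟶ X) {q : ℕ}
    (hP : ∀ (U V : X.Opens) (e : V ≤ φ ⁻¹ᵁ U) (s : Γ(X, U)),
      ∃ t : Γ(X, V), φ.appLE U V e s = t ^ q)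
    (hNoeth : ∀ V : C.Opens, IsAffineOpen V → IsNoetherianRing Γ(C, V))
    [CompactSpace C] (Z : Set X) (hZ : IsClosed Z) (n : ℕ)
    (hq : q ^ n > ramDeg c₂ Z)
    (hinv : CorrInvariant (c₁ ≫ iterateHom φ n) c₂ Z) :
    ContractingNear (c₁ ≫ iterateHom φ n) c₂ Z := by
  obtain ⟨m₀, hm₀pos, hm₀⟩ := exists_uniform_radical_pow_le c₂ Z hNoeth
  have hram : 0 < ramDeg c₂ Z ∧ ∀ y : C,
      (pullbackStalkIdeal c₂ Z y).radical ^ (ramDeg c₂ Z) ≤ pullbackStalkIdeal c₂ Z y :=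
    Nat.sInf_mem (⟨m₀, hm₀pos, hm₀⟩ : Set.Nonempty {m | 0 < m ∧ ∀ y : C,
      (pullbackStalkIdeal c₂ Z y).radical ^ m ≤ pullbackStalkIdeal c₂ Z y})
  have hFG := frobGerm_iter hP n Z
  have hF1 : ∀ y : C, pullbackStalkIdeal (c₁ ≫ iterateHom φ n) Z y ≤
      (pullbackStalkIdeal c₁ ((iterateHom φ n).base ⁻¹' Z) y) ^ (q ^ n) := by
    intro y
    have hcomp : pullbackStalkIdeal (c₁ ≫ iterateHom φ n) Z y =
        Ideal.map (c₁.stalkMap y).hom (Ideal.map ((iterateHom φ n).stalkMap (c₁.base y)).hom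
          (stalkVanishingIdeal X Z ((iterateHom φ n).base (c₁.base y)))) := by
      show Ideal.map ((c₁ ≫ iterateHom φ n).stalkMap y).hom
          (stalkVanishingIdeal X Z ((c₁ ≫ iterateHom φ n).base y)) = _
      rw [Scheme.Hom.stalkMap_comp]
      exact (Ideal.map_map _ _).symm
    refine le_trans (le_of_eq hcomp) ?_
    refine le_trans (Ideal.map_mono (hFG (c₁.base y))) ?_
    rw [Ideal.map_pow]
    exact le_rfl
  have hF2 : ∀ y : C, pullbackStalkIdeal c₁ ((iterateHom φ n).base ⁻¹' Z) y ≤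
      (pullbackStalkIdeal c₂ Z y).radical := by
    intro y
    show Ideal.map (c₁.stalkMap y).hom
      (stalkVanishingIdeal X ((iterateHom φ n).base ⁻¹' Z) (c₁.base y)) ≤ _
    rw [Ideal.map_le_iff_le_comap, stalkVanishingIdeal]
    apply Ideal.span_le.2
    rintro g ⟨U, hx, s, rfl, hs⟩
    rw [SetLike.mem_coe, Ideal.mem_comap, stalkMap_germ_appLE c₁ le_rfl hx s]
    apply germ_mem_radical_pullbackStalkIdeal c₂ hZ hx
    intro w hw hwZ hu
    have h2 : c₁.base w ∈ (iterateHom φ n).base ⁻¹' Z := hinv ⟨w, hwZ, rfl⟩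
    have h3 : IsUnit (c₁.stalkMap w (X.presheaf.germ U (c₁.base w) hw s)) := by
      rw [stalkMap_germ_appLE c₁ le_rfl hw s]
      exact hu
    exact hs (c₁.base w) hw h2 ((isUnit_map_iff (c₁.stalkMap w).hom _).1 h3)
  have hmlt : ramDeg c₂ Z < q ^ n := hq
  constructor
  · intro y
    refine le_trans (hF1 y) ?_
    refine le_trans (Ideal.pow_right_mono (hF2 y) _) ?_
    exact le_trans (Ideal.pow_le_pow_right hmlt.le) (hram.2 y)
  · refine ⟨ramDeg c₂ Z, hram.1, ?_⟩
    intro y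
    calc pullbackStalkIdeal (c₁ ≫ iterateHom φ n) Z y ^ ramDeg c₂ Z
        ≤ ((pullbackStalkIdeal c₁ ((iterateHom φ n).base ⁻¹' Z) y) ^ (q ^ n)) ^ ramDeg c₂ Z :=
          Ideal.pow_right_mono (hF1 y) _
      _ = (pullbackStalkIdeal c₁ ((iterateHom φ n).base ⁻¹' Z) y) ^ (q ^ n * ramDeg c₂ Z) := by
          rw [← pow_mul]
      _ ≤ ((pullbackStalkIdeal c₂ Z y).radical) ^ (q ^ n * ramDeg c₂ Z) :=
          Ideal.pow_right_mono (hF2 y) _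
      _ ≤ ((pullbackStalkIdeal c₂ Z y).radical) ^ (ramDeg c₂ Z * (ramDeg c₂ Z + 1)) := by
          apply Ideal.pow_le_pow_right
          calc ramDeg c₂ Z * (ramDeg c₂ Z + 1) = (ramDeg c₂ Z + 1) * ramDeg c₂ Z := by ring
            _ ≤ q ^ n * ramDeg c₂ Z := Nat.mul_le_mul_right _ (Nat.succ_le_of_lt hmlt)
      _ = (((pullbackStalkIdeal c₂ Z y).radical) ^ (ramDeg c₂ Z)) ^ (ramDeg c₂ Z + 1) := by
          rw [← pow_mul]
      _ ≤ (pullbackStalkIdeal c₂ Z y) ^ (ramDeg c₂ Z + 1) :=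
          Ideal.pow_right_mono (hram.2 y) _

end FrobTwist

/-- **Lemma 1.11.**  Let `F` be an algebraic closure of `𝔽_q`, let `c : C ⟶ X ×_F X` be a
correspondence over `F` with `X` defined over `𝔽_q` (so `X = X₀ ×_{Spec 𝔽_q} Spec F`), and
let `Z ⊆ X` be a closed subset.  Let `n ∈ ℕ` be such that `q^n > ram(c₂, Z)` and `Z` is
`c^(n)`-invariant, where `c^(n) = (φ_{q^n} ∘ c₁, c₂)`.  Then `c^(n)` is contracting
near `Z`. -/
theorem frobenius_twist_contracting
    {Fq F : Type u} [Field Fq] [Fintype Fq] [Field F] [Algebra Fq F] [IsAlgClosure Fq F]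
    -- the `𝔽_q`-model `X₀`, of finite type over `𝔽_q`:
    (X₀ : Scheme.{u}) (sX₀ : X₀ ⟶ Spec (CommRingCat.of Fq))
    [LocallyOfFiniteType sX₀] [QuasiCompact sX₀]
    -- the `q`-power Frobenius of the model:
    (fr : X₀ ⟶ X₀) (hfr : IsSchemeFrobenius (Fintype.card Fq) fr) (hfr₀ : fr ≫ sX₀ = sX₀)
    -- `X := X₀ ×_{Spec 𝔽_q} Spec F` is of finite type over `F`:
    [LocallyOfFiniteType (pullback.snd sX₀ (specOfAlgebra Fq F))]
    [QuasiCompact (pullback.snd sX₀ (specOfAlgebra Fq F))]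
    -- the correspondence `c : C ⟶ X ×_F X` over `F`:
    (C : Scheme.{u}) (sC : C ⟶ Spec (CommRingCat.of F))
    [LocallyOfFiniteType sC] [QuasiCompact sC]
    (c : C ⟶ pullback (pullback.snd sX₀ (specOfAlgebra Fq F))
        (pullback.snd sX₀ (specOfAlgebra Fq F)))
    -- a closed subset `Z ⊆ X`:
    (Z : Set ↥(pullback sX₀ (specOfAlgebra Fq F) : Scheme.{u})) (hZ : IsClosed Z)
    -- `n` is such that `q^n > ram(c₂, Z)`:
    (n : ℕ)
    (hq : Fintype.card Fq ^ n >
      ramDeg (c ≫ pullback.snd (pullback.snd sX₀ (specOfAlgebra Fq F))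
        (pullback.snd sX₀ (specOfAlgebra Fq F))) Z)
    -- `Z` is `c^(n)`-invariant:
    (hinv : CorrInvariant
      ((c ≫ pullback.fst (pullback.snd sX₀ (specOfAlgebra Fq F))
          (pullback.snd sX₀ (specOfAlgebra Fq F))) ≫
        iterateHom (baseChangeEnd sX₀ (specOfAlgebra Fq F) fr hfr₀) n)
      (c ≫ pullback.snd (pullback.snd sX₀ (specOfAlgebra Fq F))
        (pullback.snd sX₀ (specOfAlgebra Fq F))) Z) :
    -- then `c^(n)` is contracting near `Z`:
    ContractingNear
      ((c ≫ pullback.fst (pullback.snd sX₀ (specOfAlgebra Fq F))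
          (pullback.snd sX₀ (specOfAlgebra Fq F))) ≫
        iterateHom (baseChangeEnd sX₀ (specOfAlgebra Fq F) fr hfr₀) n)
      (c ≫ pullback.snd (pullback.snd sX₀ (specOfAlgebra Fq F))
        (pullback.snd sX₀ (specOfAlgebra Fq F))) Z := by
  haveI : CompactSpace ↑↑C.toPresheafedSpace := FrobTwist.compactSpace_of_quasiCompact sC
    (inferInstanceAs (CompactSpace (PrimeSpectrum F)))
  exact FrobTwist.main_core
    (c ≫ pullback.fst (pullback.snd sX₀ (specOfAlgebra Fq F))
      (pullback.snd sX₀ (specOfAlgebra Fq F)))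
    (c ≫ pullback.snd (pullback.snd sX₀ (specOfAlgebra Fq F))
      (pullback.snd sX₀ (specOfAlgebra Fq F)))
    (baseChangeEnd sX₀ (specOfAlgebra Fq F) fr hfr₀)
    (fun U V e s => FrobTwist.baseChangeEnd_pow X₀ sX₀ fr hfr hfr₀ U V e s)
    (fun V hV => FrobTwist.isNoetherianRing_sections sC V hV)
    Z hZ n hq hinv
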